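/- The vector field X on O⁺ defined by X₁ = (x+1)(1+y+z)(yz−x−y−a)/(yz), X₂ = (y+1)(z−x)(a+x+y+z+xz)/(xz), X₃ = (z+1)(1+x+y)(a+y+z−xy)/(xy) satisfies the compatibility condition X(F(q)) = (DF)_q X(q) for all q ∈ O⁺, where F(x,y,z) = (y, z, (a+y+z)/x). -/

import Mathlib

/-- The vector field `X` with components
`X₁ = (x+1)(1+y+z)(yz−x−y−a)/(yz)`, `X₂ = (y+1)(z−x)(a+x+y+z+xz)/(xz)`,
`X₃ = (z+1)(1+x+y)(a+y+z−xy)/(xy)` satisfies the compatibility condition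
`X(F(q)) = (DF)_q X(q)` on the positive octant, where
`F(x,y,z) = (y, z, (a+y+z)/x)`. -/
theorem lyness_vector_field_compatibility (a : ℝ) (ha : 0 < a) :
    let F : ℝ × ℝ × ℝ → ℝ × ℝ × ℝ := fun p => (p.2.1, p.2.2, (a + p.2.1 + p.2.2) / p.1)
    let X : ℝ × ℝ × ℝ → ℝ × ℝ × ℝ := fun p =>
      ((p.1 + 1) * (1 + p.2.1 + p.2.2) * (p.2.1 * p.2.2 - p.1 - p.2.1 - a) / (p.2.1 * p.2.2),
       (p.2.1 + 1) * (p.2.2 - p.1) * (a + p.1 + p.2.1 + p.2.2 + p.1 * p.2.2) / (p.1 * p.2.2),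
       (p.2.2 + 1) * (1 + p.1 + p.2.1) * (a + p.2.1 + p.2.2 - p.1 * p.2.1) / (p.1 * p.2.1))
    ∀ q : ℝ × ℝ × ℝ, 0 < q.1 → 0 < q.2.1 → 0 < q.2.2 →
      X (F q) = fderiv ℝ F q (X q) := by
  intro F X q hx hy hz
  have hx0 : q.1 ≠ 0 := ne_of_gt hx
  have hy0 : q.2.1 ≠ 0 := ne_of_gt hy
  have hz0 : q.2.2 ≠ 0 := ne_of_gt hz
  have h1 : HasFDerivAt (fun p : ℝ × ℝ × ℝ => p.2.1)
      ((ContinuousLinearMap.fst ℝ ℝ ℝ).comp (ContinuousLinearMap.snd ℝ ℝ (ℝ × ℝ))) q :=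
    hasFDerivAt_fst.comp q hasFDerivAt_snd
  have h2 : HasFDerivAt (fun p : ℝ × ℝ × ℝ => p.2.2)
      ((ContinuousLinearMap.snd ℝ ℝ ℝ).comp (ContinuousLinearMap.snd ℝ ℝ (ℝ × ℝ))) q :=
    hasFDerivAt_snd.comp q hasFDerivAt_snd
  have hnum : HasFDerivAt (fun p : ℝ × ℝ × ℝ => a + p.2.1 + p.2.2)
      (0 + (ContinuousLinearMap.fst ℝ ℝ ℝ).comp (ContinuousLinearMap.snd ℝ ℝ (ℝ × ℝ))
        + (ContinuousLinearMap.snd ℝ ℝ ℝ).comp (ContinuousLinearMap.snd ℝ ℝ (ℝ × ℝ))) q :=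
    ((hasFDerivAt_const a q).add h1).add h2
  have hinv : HasFDerivAt (fun p : ℝ × ℝ × ℝ => p.1⁻¹)
      ((-(q.1 ^ 2)⁻¹) • ContinuousLinearMap.fst ℝ ℝ (ℝ × ℝ)) q :=
    (hasDerivAt_inv hx0).comp_hasFDerivAt q hasFDerivAt_fst
  have hg := hnum.mul hinv
  have hF : HasFDerivAt (fun p : ℝ × ℝ × ℝ =>
      (p.2.1, p.2.2, (a + p.2.1 + p.2.2) * p.1⁻¹)) _ q := h1.prodMk (h2.prodMk hg)
  have hFeq : F = fun p : ℝ × ℝ × ℝ =>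
      (p.2.1, p.2.2, (a + p.2.1 + p.2.2) * p.1⁻¹) := by
    funext p; simp [F, div_eq_mul_inv]
  rw [hFeq]
  rw [hF.fderiv]
  simp only [ContinuousLinearMap.prod_apply, ContinuousLinearMap.smul_apply,
    ContinuousLinearMap.sub_apply, ContinuousLinearMap.add_apply,
    ContinuousLinearMap.coe_comp', Function.comp_apply, ContinuousLinearMap.coe_fst',
    ContinuousLinearMap.coe_snd', ContinuousLinearMap.zero_apply, smul_eq_mul]
  simp only [F, X]
  refine Prod.ext ?_ (Prod.ext ?_ ?_)
  · field_simp
    ring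
  · field_simp
    ring
  · field_simp
    ring
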